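/- If g(z) = 1 + c_1 z + c_2 z² + ⋯ is analytic on the unit disk with Re g(z) > 0 for all |z| < 1, then for any complex number μ, |c_2 - μ c_1²| ≤ 2 max{1, |2μ - 1|}. -/

import Mathlib

open Complex Metric

lemma normSq_lt_one_of_norm_lt {a : ℂ} (ha : ‖a‖ < 1) : normSq a < 1 := by
  have h := Complex.sq_norm a
  have : ‖a‖ < 1 := ha
  nlinarith [norm_nonneg a]

-- Möbius norm inequality
lemma mobius_norm_lt {a u : ℂ} (ha : ‖a‖ < 1) (hu : ‖u‖ < 1) :
    ‖u - a‖ < ‖1 - (starRingEnd ℂ) a * u‖ := by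
  have ha2 := normSq_lt_one_of_norm_lt ha
  have hu2 := normSq_lt_one_of_norm_lt hu
  refine lt_of_pow_lt_pow_left₀ 2 (norm_nonneg _) ?_
  have e1 : ‖u - a‖ ^ 2 = normSq (u - a) := by rw [Complex.sq_norm]
  have e2 : ‖1 - (starRingEnd ℂ) a * u‖ ^ 2 = normSq (1 - (starRingEnd ℂ) a * u) := by
    rw [Complex.sq_norm]
  rw [e1, e2]
  simp only [normSq_apply, sub_re, sub_im, mul_re, mul_im, one_re, one_im,
    Complex.conj_re, Complex.conj_im] at *
  nlinarith [sq_nonneg (a.re*u.re + a.im*u.im), sq_nonneg (a.re*u.im - a.im*u.re)]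

lemma schwarz_pick_center {φ : ℂ → ℂ} (hφ : DifferentiableOn ℂ φ (ball 0 1))
    (hb : ∀ z ∈ ball (0:ℂ) 1, ‖φ z‖ ≤ 1) : ‖deriv φ 0‖ ≤ 1 - ‖φ 0‖ ^ 2 := by
  have h0 : (0:ℂ) ∈ ball (0:ℂ) 1 := mem_ball_self one_pos
  by_cases hmax : ∃ z₀ ∈ ball (0:ℂ) 1, 1 ≤ ‖φ z₀‖
  · obtain ⟨z₀, hz₀, hz₀1⟩ := hmax
    have hmaxOn : IsMaxOn (norm ∘ φ) (ball (0:ℂ) 1) z₀ := fun x hx =>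
      le_trans (hb x hx) hz₀1
    have hconst := Complex.eqOn_of_isPreconnected_of_isMaxOn_norm
      (convex_ball (0:ℂ) 1).isPreconnected isOpen_ball hφ hz₀ hmaxOn
    have hφ0 : φ 0 = φ z₀ := hconst h0
    have hd0 : deriv φ 0 = 0 := by
      have hev : φ =ᶠ[nhds (0:ℂ)] (fun _ => φ z₀) := by
        filter_upwards [isOpen_ball.mem_nhds h0] with x hx using hconst hx
      rw [hev.deriv_eq, deriv_const]
    have hn : ‖φ 0‖ = 1 := le_antisymm (hb 0 h0) (hφ0 ▸ hz₀1)
    rw [hd0, hn]; simp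
  · push_neg at hmax
    set a := φ 0 with ha_def
    have ha : ‖a‖ < 1 := hmax 0 h0
    set ψ : ℂ → ℂ := fun z => (φ z - a) / (1 - (starRingEnd ℂ) a * φ z) with hψ_def
    have hden : ∀ z ∈ ball (0:ℂ) 1, 1 - (starRingEnd ℂ) a * φ z ≠ 0 := by
      intro z hz
      have : ‖(starRingEnd ℂ) a * φ z‖ < 1 := by
        rw [norm_mul, RCLike.norm_conj]
        calc ‖a‖ * ‖φ z‖ ≤ ‖a‖ * 1 := by
              exact mul_le_mul_of_nonneg_left (hb z hz) (norm_nonneg a)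
          _ < 1 := by simpa using ha
      intro h
      rw [sub_eq_zero] at h
      rw [← h] at this
      simp at this
    have hψd : DifferentiableOn ℂ ψ (ball 0 1) :=
      (hφ.sub_const a).div ((differentiableOn_const 1).sub
        ((differentiableOn_const _).mul hφ)) hden
    have hψ0 : ψ 0 = 0 := by simp [hψ_def, ← ha_def]
    have hmaps : Set.MapsTo ψ (ball (0:ℂ) 1) (ball (ψ 0) 1) := by
      intro z hz
      rw [hψ0, mem_ball, dist_zero_right, hψ_def]
      rw [norm_div, div_lt_one (norm_pos_iff.mpr (hden z hz))]
      exact mobius_norm_lt ha (hmax z hz)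
    have hsch : ‖deriv ψ 0‖ ≤ 1 / 1 :=
      Complex.norm_deriv_le_div_of_mapsTo_ball hψd (hmaps.mono_right ball_subset_closedBall) one_pos
    have hφ0d : DifferentiableAt ℂ φ 0 := hφ.differentiableAt (isOpen_ball.mem_nhds h0)
    have hd := hφ0d.hasDerivAt
    have hnum : HasDerivAt (fun z => φ z - a) (deriv φ 0) 0 := hd.sub_const a
    have hdenD : HasDerivAt (fun z => 1 - (starRingEnd ℂ) a * φ z)
        (-((starRingEnd ℂ) a * deriv φ 0)) 0 := (hd.const_mul _).const_sub 1
    have hψder : HasDerivAt ψ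
        ((deriv φ 0 * (1 - (starRingEnd ℂ) a * φ 0) -
          (φ 0 - a) * -((starRingEnd ℂ) a * deriv φ 0)) / (1 - (starRingEnd ℂ) a * φ 0) ^ 2) 0 :=
      hnum.div hdenD (hden 0 h0)
    have hnsq : normSq a < 1 := normSq_lt_one_of_norm_lt ha
    have hval : deriv ψ 0 = deriv φ 0 / ((1 : ℂ) - (normSq a : ℂ)) := by
      rw [hψder.deriv, ← ha_def]
      have hca : (starRingEnd ℂ) a * a = (normSq a : ℂ) := by
        rw [mul_comm, Complex.mul_conj]
      rw [sub_self, zero_mul, sub_zero, hca]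
      have hne : (1 : ℂ) - (normSq a : ℂ) ≠ 0 := by
        intro h
        have := congrArg Complex.re h
        simp at this
        linarith
      field_simp
    have hnorm : ‖(1 : ℂ) - (normSq a : ℂ)‖ = 1 - normSq a := by
      rw [show (1 : ℂ) - (normSq a : ℂ) = ((1 - normSq a : ℝ) : ℂ) by push_cast; ring]
      rw [Complex.norm_real, Real.norm_eq_abs, abs_of_pos (by linarith)]
    have hfin : ‖deriv φ 0‖ / (1 - normSq a) ≤ 1 := by
      calc ‖deriv φ 0‖ / (1 - normSq a) = ‖deriv ψ 0‖ := by
            rw [hval, norm_div, hnorm]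
        _ ≤ 1 := by simpa using hsch
    have hsq : ‖a‖ ^ 2 = normSq a := by rw [Complex.sq_norm]
    rw [hsq]
    rw [div_le_one (by linarith)] at hfin
    linarith

lemma schur_coeffs {ω : ℂ → ℂ} (hω : DifferentiableOn ℂ ω (ball 0 1)) (hω0 : ω 0 = 0)
    (hmaps : ∀ z ∈ ball (0:ℂ) 1, ‖ω z‖ < 1) :
    ‖deriv ω 0‖ ≤ 1 ∧ ‖iteratedDeriv 2 ω 0 / 2‖ ≤ 1 - ‖deriv ω 0‖ ^ 2 := by
  have h0 : (0:ℂ) ∈ ball (0:ℂ) 1 := mem_ball_self one_pos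
  set φ : ℂ → ℂ := dslope ω 0 with hφ_def
  have hφd : DifferentiableOn ℂ φ (ball 0 1) :=
    (differentiableOn_dslope (ball_mem_nhds _ one_pos)).mpr hω
  have hmaps' : Set.MapsTo ω (ball (0:ℂ) 1) (ball (ω 0) 1) := by
    intro z hz
    rw [hω0, mem_ball, dist_zero_right]
    exact hmaps z hz
  have hφb : ∀ z ∈ ball (0:ℂ) 1, ‖φ z‖ ≤ 1 := by
    intro z hz
    simpa using Complex.norm_dslope_le_div_of_mapsTo_ball hω (hmaps'.mono_right ball_subset_closedBall) hz
  have hφ0 : φ 0 = deriv ω 0 := dslope_same ω 0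
  have ha : ‖deriv ω 0‖ ≤ 1 := hφ0 ▸ hφb 0 h0
  have hsp : ‖deriv φ 0‖ ≤ 1 - ‖φ 0‖ ^ 2 := schwarz_pick_center hφd hφb
  -- ω z = z * φ z
  have hωφ : ∀ z, ω z = z * φ z := by
    intro z
    have := sub_smul_dslope ω 0 z
    simp only [sub_zero, hω0, smul_eq_mul] at this
    exact this.symm
  -- deriv ω = φ + z φ' on the ball
  have hderiv_eq : ∀ z ∈ ball (0:ℂ) 1, deriv ω z = φ z + z * deriv φ z := by
    intro z hz
    have hφz : DifferentiableAt ℂ φ z := hφd.differentiableAt (isOpen_ball.mem_nhds hz)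
    have : HasDerivAt (fun w => w * φ w) (1 * φ z + z * deriv φ z) z :=
      (hasDerivAt_id z).mul hφz.hasDerivAt
    have h2 : HasDerivAt ω (1 * φ z + z * deriv φ z) z := by
      simpa only [← hωφ] using this
    rw [h2.deriv]; ring
  -- φ analytic, so deriv φ differentiable
  have hφan : AnalyticOnNhd ℂ φ (ball 0 1) := hφd.analyticOnNhd isOpen_ball
  have hφ'd : DifferentiableAt ℂ (deriv φ) 0 := (hφan.deriv 0 h0).differentiableAt
  have hφ0d : DifferentiableAt ℂ φ 0 := hφd.differentiableAt (isOpen_ball.mem_nhds h0)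
  have hit : iteratedDeriv 2 ω 0 = 2 * deriv φ 0 := by
    have hev : deriv ω =ᶠ[nhds (0:ℂ)] fun z => φ z + z * deriv φ z := by
      filter_upwards [isOpen_ball.mem_nhds h0] with x hx using hderiv_eq x hx
    have h1 : HasDerivAt (fun z => φ z + z * deriv φ z)
        (deriv φ 0 + (1 * deriv φ 0 + 0 * deriv (deriv φ) 0)) 0 :=
      hφ0d.hasDerivAt.add ((hasDerivAt_id 0).mul hφ'd.hasDerivAt)
    rw [show (2:ℕ) = 1 + 1 by rfl, iteratedDeriv_succ, iteratedDeriv_one]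
    rw [hev.deriv_eq, h1.deriv]; ring
  refine ⟨ha, ?_⟩
  rw [hit, hφ0] at *
  calc ‖2 * deriv φ 0 / 2‖ = ‖deriv φ 0‖ := by
        rw [mul_comm, mul_div_assoc]; norm_num
    _ ≤ 1 - ‖deriv ω 0‖ ^ 2 := hφ0 ▸ hsp

theorem keogh_merkes (g : ℂ → ℂ) (hg : DifferentiableOn ℂ g (ball (0:ℂ) 1))
    (hg0 : g 0 = 1) (hre : ∀ z ∈ ball (0:ℂ) 1, 0 < (g z).re) (μ : ℂ) :
    ‖iteratedDeriv 2 g 0 / 2 - μ * (deriv g 0) ^ 2‖ ≤ 2 * max 1 ‖2 * μ - 1‖ := by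
  have h0 : (0:ℂ) ∈ ball (0:ℂ) 1 := mem_ball_self one_pos
  set ω : ℂ → ℂ := fun z => (g z - 1) / (g z + 1) with hω_def
  have hden : ∀ z ∈ ball (0:ℂ) 1, g z + 1 ≠ 0 := by
    intro z hz h
    have := congrArg Complex.re h
    simp [Complex.add_re] at this
    have := hre z hz
    linarith
  have hωd : DifferentiableOn ℂ ω (ball 0 1) :=
    (hg.sub_const 1).div (hg.add_const 1) hden
  have hω0 : ω 0 = 0 := by simp [hω_def, hg0]
  have hmaps : ∀ z ∈ ball (0:ℂ) 1, ‖ω z‖ < 1 := by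
    intro z hz
    have hre' := hre z hz
    have hlt : ‖g z - 1‖ < ‖g z + 1‖ := by
      refine lt_of_pow_lt_pow_left₀ 2 (norm_nonneg _) ?_
      have e1 : ‖g z - 1‖ ^ 2 = normSq (g z - 1) := by rw [Complex.sq_norm]
      have e2 : ‖g z + 1‖ ^ 2 = normSq (g z + 1) := by rw [Complex.sq_norm]
      rw [e1, e2]
      simp only [normSq_apply, sub_re, sub_im, add_re, add_im, one_re, one_im]
      nlinarith
    rw [hω_def]
    simp only
    rw [norm_div, div_lt_one (lt_of_le_of_lt (norm_nonneg _) hlt)]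
    exact hlt
  have hone : ∀ z ∈ ball (0:ℂ) 1, (1:ℂ) - ω z ≠ 0 := by
    intro z hz h
    rw [sub_eq_zero] at h
    have := hmaps z hz
    rw [← h] at this
    simp at this
  -- g = (1+ω)/(1-ω) on the ball
  have hgid : ∀ z ∈ ball (0:ℂ) 1, g z = (1 + ω z) / (1 - ω z) := by
    intro z hz
    have h1 := hden z hz
    have e1 : (1:ℂ) - ω z = 2 / (g z + 1) := by
      rw [hω_def]; field_simp; norm_num
    have e2 : (1:ℂ) + ω z = 2 * g z / (g z + 1) := by
      rw [hω_def]; field_simp; ring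
    rw [e1, e2]
    field_simp
  -- deriv g on the ball
  have hdg : ∀ z ∈ ball (0:ℂ) 1, deriv g z = 2 * deriv ω z / (1 - ω z) ^ 2 := by
    intro z hz
    have hωz : DifferentiableAt ℂ ω z := hωd.differentiableAt (isOpen_ball.mem_nhds hz)
    have hnum : HasDerivAt (fun w => 1 + ω w) (deriv ω z) z := hωz.hasDerivAt.const_add 1
    have hdenD : HasDerivAt (fun w => 1 - ω w) (-(deriv ω z)) z := hωz.hasDerivAt.const_sub 1
    have hF : HasDerivAt (fun w => (1 + ω w) / (1 - ω w))
        ((deriv ω z * (1 - ω z) - (1 + ω z) * -(deriv ω z)) / (1 - ω z) ^ 2) z :=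
      hnum.div hdenD (hone z hz)
    have hev : g =ᶠ[nhds z] fun w => (1 + ω w) / (1 - ω w) := by
      filter_upwards [isOpen_ball.mem_nhds hz] with x hx using hgid x hx
    have hG : HasDerivAt g
        ((deriv ω z * (1 - ω z) - (1 + ω z) * -(deriv ω z)) / (1 - ω z) ^ 2) z :=
      hF.congr_of_eventuallyEq hev
    rw [hG.deriv]
    have h2 := hone z hz
    field_simp
    ring
  have hdg0 : deriv g 0 = 2 * deriv ω 0 := by
    rw [hdg 0 h0, hω0]; simp
  -- second derivative
  have hωan : AnalyticOnNhd ℂ ω (ball 0 1) := hωd.analyticOnNhd isOpen_ball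
  have hω'd : DifferentiableAt ℂ (deriv ω) 0 := (hωan.deriv 0 h0).differentiableAt
  have hω0d : DifferentiableAt ℂ ω 0 := hωd.differentiableAt (isOpen_ball.mem_nhds h0)
  have hit : iteratedDeriv 2 g 0 = 2 * iteratedDeriv 2 ω 0 + 4 * (deriv ω 0) ^ 2 := by
    have hev : deriv g =ᶠ[nhds (0:ℂ)] fun z => 2 * deriv ω z / (1 - ω z) ^ 2 := by
      filter_upwards [isOpen_ball.mem_nhds h0] with x hx using hdg x hx
    have hnum : HasDerivAt (fun z => 2 * deriv ω z) (2 * deriv (deriv ω) 0) 0 :=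
      hω'd.hasDerivAt.const_mul 2
    have hdenD : HasDerivAt (fun z => ((1:ℂ) - ω z) ^ 2)
        (((2:ℕ):ℂ) * (1 - ω 0) ^ (2 - 1) * -(deriv ω 0)) 0 :=
      (hω0d.hasDerivAt.const_sub 1).pow 2
    have hdne : ((1:ℂ) - ω 0) ^ 2 ≠ 0 := by rw [hω0]; norm_num
    have hF : HasDerivAt (fun z => 2 * deriv ω z / (1 - ω z) ^ 2)
        ((2 * deriv (deriv ω) 0 * ((1 - ω 0) ^ 2) -
          2 * deriv ω 0 * (((2:ℕ):ℂ) * (1 - ω 0) ^ (2 - 1) * -(deriv ω 0))) /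
          (((1 - ω 0) ^ 2) ^ 2)) 0 := hnum.div hdenD hdne
    have hg2 : iteratedDeriv 2 g 0 = deriv (deriv g) 0 := by
      rw [show (2:ℕ) = 1 + 1 from rfl, iteratedDeriv_succ, iteratedDeriv_one]
    have hω2 : iteratedDeriv 2 ω 0 = deriv (deriv ω) 0 := by
      rw [show (2:ℕ) = 1 + 1 from rfl, iteratedDeriv_succ, iteratedDeriv_one]
    rw [hg2, hω2, hev.deriv_eq, hF.deriv, hω0]
    norm_num
    ring
  -- Schur coefficients
  obtain ⟨ha, hb⟩ := schur_coeffs hωd hω0 hmaps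
  set a := deriv ω 0
  set B := iteratedDeriv 2 ω 0
  have key : iteratedDeriv 2 g 0 / 2 - μ * (deriv g 0) ^ 2 = B + (2 - 4 * μ) * a ^ 2 := by
    rw [hit, hdg0]; ring
  rw [key]
  have h1 : ‖B + (2 - 4 * μ) * a ^ 2‖ ≤ ‖B‖ + ‖2 - 4 * μ‖ * ‖a‖ ^ 2 := by
    calc ‖B + (2 - 4 * μ) * a ^ 2‖ ≤ ‖B‖ + ‖(2 - 4 * μ) * a ^ 2‖ := norm_add_le _ _
      _ = ‖B‖ + ‖2 - 4 * μ‖ * ‖a‖ ^ 2 := by rw [norm_mul, norm_pow]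
  have hB : ‖B‖ ≤ 2 * (1 - ‖a‖ ^ 2) := by
    have : ‖B / 2‖ = ‖B‖ / 2 := by
      rw [norm_div]; norm_num
    rw [this] at hb
    linarith
  have h24 : ‖2 - 4 * μ‖ = 2 * ‖2 * μ - 1‖ := by
    rw [show (2:ℂ) - 4 * μ = -2 * (2 * μ - 1) by ring, norm_mul]
    norm_num
  set m := ‖2 * μ - 1‖
  set t := ‖a‖ ^ 2
  have ht0 : 0 ≤ t := sq_nonneg _
  have ht1 : t ≤ 1 := by
    have h := pow_le_pow_left₀ (norm_nonneg a) ha 2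
    rw [one_pow] at h
    exact h
  have hm0 : 0 ≤ m := norm_nonneg _
  rcases le_total m 1 with hm | hm
  · rw [max_eq_left hm]
    nlinarith
  · rw [max_eq_right hm]
    nlinarith
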